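/- If a nonempty sequent ⊢ Γ is provable in the sequent calculus MLL1, then the formula ⋁Γ is provable in the deep inference system MLS1X. -/

import Mathlib

set_option linter.unusedVariables false

/-! ## First-order terms and formulas in negation normal form -/

/-- First-order terms: variables and function symbols are named by natural numbers.
(A function symbol together with the number of arguments it is applied to plays the
role of a symbol of fixed finite arity; there are countably many symbols of each arity.) -/
inductive Term : Type where
  | var : ℕ → Term
  | fn  : ℕ → List Term → Term

/-- The variable `x` occurs in the term. -/
inductive Term.HasVar : Term → ℕ → Prop where
  | var (x : ℕ) : HasVar (.var x) x
  | fn {f : ℕ} {ts : List Term} {t : Term} {x : ℕ} :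
      t ∈ ts → HasVar t x → HasVar (.fn f ts) x

/-- Simultaneous substitution on terms. -/
def Term.subst (σ : ℕ → Term) : Term → Term
  | .var x => σ x
  | .fn f ts => .fn f (ts.attach.map fun t => t.1.subst σ)
decreasing_by
  have := List.sizeOf_lt_of_mem t.2
  simp at *; omega

/-- Renaming of variables in a term. -/
def Term.rename (ρ : ℕ → ℕ) (t : Term) : Term := t.subst (fun x => .var (ρ x))

/-- Formulas in negation normal form: `pos p ts` is the atom `p(ts)` and
`neg p ts` is the atom `p̄(ts)` built from the dual predicate symbol. -/
inductive Form : Type where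
  | pos : ℕ → List Term → Form
  | neg : ℕ → List Term → Form
  | top : Form
  | bot : Form
  | and : Form → Form → Form
  | or  : Form → Form → Form
  | all : ℕ → Form → Form
  | ex  : ℕ → Form → Form

namespace Form

/-- Atoms: `⊤`, `⊥`, `p(ts)`, `p̄(ts)`. -/
def IsAtom : Form → Prop
  | pos _ _ => True
  | neg _ _ => True
  | top => True
  | bot => True
  | _ => False

/-- Negation, defined via De Morgan duality. -/
def negf : Form → Form
  | pos p ts => neg p ts
  | neg p ts => pos p ts
  | top => bot
  | bot => top
  | and A B => or A.negf B.negf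
  | or A B => and A.negf B.negf
  | all x A => ex x A.negf
  | ex x A => all x A.negf

/-- The variable `x` occurs free in the formula. -/
inductive FreeVar : Form → ℕ → Prop where
  | pos {p ts t x} : t ∈ ts → Term.HasVar t x → FreeVar (pos p ts) x
  | neg {p ts t x} : t ∈ ts → Term.HasVar t x → FreeVar (neg p ts) x
  | andl {A B x} : FreeVar A x → FreeVar (and A B) x
  | andr {A B x} : FreeVar B x → FreeVar (and A B) x
  | orl {A B x} : FreeVar A x → FreeVar (or A B) x
  | orr {A B x} : FreeVar B x → FreeVar (or A B) x
  | all {A x y} : FreeVar A x → x ≠ y → FreeVar (all y A) x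
  | ex {A x y} : FreeVar A x → x ≠ y → FreeVar (ex y A) x

/-- Substitution of the term `u` for all free occurrences of the variable `x`. -/
def subst1 (x : ℕ) (u : Term) : Form → Form
  | pos p ts => pos p (ts.map (Term.subst (fun y => if y = x then u else .var y)))
  | neg p ts => neg p (ts.map (Term.subst (fun y => if y = x then u else .var y)))
  | top => top
  | bot => bot
  | and A B => and (A.subst1 x u) (B.subst1 x u)
  | or A B => or (A.subst1 x u) (B.subst1 x u)
  | all y A => if y = x then all y A else all y (A.subst1 x u)
  | ex y A => if y = x then ex y A else ex y (A.subst1 x u)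

/-- Application of a variable renaming to a formula, renaming all occurrences
of variables (both free and bound). -/
def renameAll (ρ : ℕ → ℕ) : Form → Form
  | pos p ts => pos p (ts.map (Term.rename ρ))
  | neg p ts => neg p (ts.map (Term.rename ρ))
  | top => top
  | bot => bot
  | and A B => and (A.renameAll ρ) (B.renameAll ρ)
  | or A B => or (A.renameAll ρ) (B.renameAll ρ)
  | all y A => all (ρ y) (A.renameAll ρ)
  | ex y A => ex (ρ y) (A.renameAll ρ)

/-- The formula contains no occurrence of `⊥`. -/
def BotFree : Form → Prop
  | bot => False
  | and A B => BotFree A ∧ BotFree B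
  | or A B => BotFree A ∧ BotFree B
  | all _ A => BotFree A
  | ex _ A => BotFree A
  | _ => True

/-- Formula equivalence `≡`: the smallest congruence generated by commutativity and
associativity of `∧` and `∨`, commutation of like quantifiers, and the scope equations
`∀x.(A∨B) ≡ (∀x.A)∨B` and `∃x.(A∧B) ≡ (∃x.A)∧B` when `x` is not free in `B`. -/
inductive Equiv : Form → Form → Prop where
  | refl (A) : Equiv A A
  | symm {A B} : Equiv A B → Equiv B A
  | trans {A B C} : Equiv A B → Equiv B C → Equiv A C
  | andCongr {A A' B B'} : Equiv A A' → Equiv B B' → Equiv (and A B) (and A' B')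
  | orCongr {A A' B B'} : Equiv A A' → Equiv B B' → Equiv (or A B) (or A' B')
  | allCongr {A A'} (x) : Equiv A A' → Equiv (all x A) (all x A')
  | exCongr {A A'} (x) : Equiv A A' → Equiv (ex x A) (ex x A')
  | andComm (A B) : Equiv (and A B) (and B A)
  | orComm (A B) : Equiv (or A B) (or B A)
  | andAssoc (A B C) : Equiv (and (and A B) C) (and A (and B C))
  | orAssoc (A B C) : Equiv (or (or A B) C) (or A (or B C))
  | allSwap (x y A) : Equiv (all x (all y A)) (all y (all x A))
  | exSwap (x y A) : Equiv (ex x (ex y A)) (ex y (ex x A))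
  | allOr (x A B) (h : ¬ FreeVar B x) : Equiv (all x (or A B)) (or (all x A) B)
  | exAnd (x A B) (h : ¬ FreeVar B x) : Equiv (ex x (and A B)) (and (ex x A) B)

/-- The list of binding occurrences of variables in a formula. -/
def bvList : Form → List ℕ
  | and A B => A.bvList ++ B.bvList
  | or A B => A.bvList ++ B.bvList
  | all x A => x :: A.bvList
  | ex x A => x :: A.bvList
  | _ => []

/-- A formula is rectified if all bound variables are distinct from one
another and from all free variables. -/
def Rectified (A : Form) : Prop :=
  A.bvList.Nodup ∧ ∀ x ∈ A.bvList, ¬ A.FreeVar x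

/-- The variable `x` occurs (free or bound) in the formula. -/
def VarOccurs (A : Form) (x : ℕ) : Prop := A.FreeVar x ∨ x ∈ A.bvList

/-- The disjunction `⋁Γ` of the formulas of a sequent (written as a list);
by convention the empty disjunction is `⊥`. -/
def bigOr : List Form → Form
  | [] => bot
  | [A] => A
  | A :: B :: Γ => or A (bigOr (B :: Γ))

end Form

/-- α-conversion: renaming of bound variables. -/
inductive Alpha : Form → Form → Prop where
  | refl (A) : Alpha A A
  | symm {A B} : Alpha A B → Alpha B A
  | trans {A B C} : Alpha A B → Alpha B C → Alpha A C
  | andCongr {A A' B B'} : Alpha A A' → Alpha B B' → Alpha (.and A B) (.and A' B')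
  | orCongr {A A' B B'} : Alpha A A' → Alpha B B' → Alpha (.or A B) (.or A' B')
  | allCongr {A A'} (x) : Alpha A A' → Alpha (.all x A) (.all x A')
  | exCongr {A A'} (x) : Alpha A A' → Alpha (.ex x A) (.ex x A')
  | allRen (x y A) (h : ¬ A.VarOccurs y) :
      Alpha (.all x A) (.all y (A.subst1 x (.var y)))
  | exRen (x y A) (h : ¬ A.VarOccurs y) :
      Alpha (.ex x A) (.ex y (A.subst1 x (.var y)))

/-- `B` is a rectification of `A`: a rectified form of `A` obtained by renaming
bound variables. -/
def IsRectification (B A : Form) : Prop := Alpha A B ∧ B.Rectified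

/-! ## Deep inference -/

/-- A (positive) context: a formula with exactly one hole in atom position. -/
inductive Ctx : Type where
  | hole : Ctx
  | andL : Ctx → Form → Ctx
  | andR : Form → Ctx → Ctx
  | orL  : Ctx → Form → Ctx
  | orR  : Form → Ctx → Ctx
  | all  : ℕ → Ctx → Ctx
  | ex   : ℕ → Ctx → Ctx

/-- `S.fill A` replaces the hole of `S` by `A`. -/
def Ctx.fill : Ctx → Form → Form
  | .hole, A => A
  | .andL S B, A => .and (S.fill A) B
  | .andR B S, A => .and B (S.fill A)
  | .orL S B, A => .or (S.fill A) B
  | .orR B S, A => .or B (S.fill A)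
  | .all x S, A => .all x (S.fill A)
  | .ex x S, A => .ex x (S.fill A)

/-- The names of the deep inference rules. -/
inductive RuleName : Type where
  | allTop   -- ∀⊤
  | aiDown   -- ai↓
  | tDown    -- t↓
  | s        -- switch
  | mix      -- mix
  | exR      -- ∃
  | equivR   -- ≡
  | wDown    -- w↓
  | m        -- medial
  | acDown   -- ac↓
  | mAll     -- m∀
  | mEx      -- m∃
  | wAll     -- w∀
  | cAll     -- c∀
  | cDown    -- general contraction c↓
  deriving DecidableEq

/-- Shallow instances of the deep inference rules: `Shallow r P Q` means that the
rule `r` rewrites the premise `P` into the conclusion `Q` (with the empty context). -/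
inductive Shallow : RuleName → Form → Form → Prop where
  | allTop (x : ℕ) : Shallow .allTop .top (.all x .top)
  | aiDown (a : Form) (h : a.IsAtom) : Shallow .aiDown .top (.or a a.negf)
  | tDown (A : Form) : Shallow .tDown A (.and A .top)
  | s (A B C : Form) : Shallow .s (.and A (.or B C)) (.or (.and A B) C)
  | mix (A B : Form) : Shallow .mix (.and A B) (.or A B)
  | exR (x : ℕ) (t : Term) (A : Form) : Shallow .exR (A.subst1 x t) (.ex x A)
  | equivR {A B : Form} (h : Form.Equiv A B) : Shallow .equivR B A
  | wDown (A B : Form) : Shallow .wDown A (.or A B)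
  | m (A B C D : Form) :
      Shallow .m (.or (.and A C) (.and B D)) (.and (.or A B) (.or C D))
  | acDown (a : Form) (h : a.IsAtom) : Shallow .acDown (.or a a) a
  | mAll (x : ℕ) (A B : Form) :
      Shallow .mAll (.or (.all x A) (.all x B)) (.all x (.or A B))
  | mEx (x : ℕ) (A B : Form) :
      Shallow .mEx (.or (.ex x A) (.ex x B)) (.ex x (.or A B))
  | wAll (x : ℕ) (A : Form) (h : ¬ A.FreeVar x) : Shallow .wAll A (.all x A)
  | cAll (x : ℕ) (A : Form) : Shallow .cAll (.all x (.all x A)) (.all x A)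
  | cDown (A : Form) : Shallow .cDown (.or A A) A

/-- One deep inference step using a rule from `R`, applied inside a context. -/
def Step (R : Set RuleName) (A B : Form) : Prop :=
  ∃ r ∈ R, ∃ (S : Ctx) (P Q : Form), Shallow r P Q ∧ A = S.fill P ∧ B = S.fill Q

/-- `Deriv R A B`: there is a derivation from `A` to `B` using only rules from `R`
(a finite sequence of deep inference steps rewriting `A` into `B`). -/
def Deriv (R : Set RuleName) : Form → Form → Prop :=
  Relation.ReflTransGen (Step R)

/-- A formula is provable in a system if there is a derivation from `⊤` to it. -/
def Provable (R : Set RuleName) (A : Form) : Prop := Deriv R .top A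

/-- The linear system `MLS1X`. -/
def MLS1X : Set RuleName :=
  {RuleName.allTop, RuleName.aiDown, RuleName.tDown, RuleName.s, RuleName.mix,
   RuleName.exR, RuleName.equivR}

/-- The system `KS1`. -/
def KS1 : Set RuleName :=
  {RuleName.allTop, RuleName.aiDown, RuleName.tDown, RuleName.s, RuleName.mix,
   RuleName.exR, RuleName.equivR, RuleName.wDown, RuleName.m, RuleName.acDown,
   RuleName.mAll, RuleName.mEx, RuleName.wAll, RuleName.cAll}

/-! ## The sequent calculi LK1 and MLL1 -/

/-- One-sided sequent calculus on multisets of formulas. `SC true` is full `LK1`;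
`SC false` is its linear fragment `MLL1` (no contraction and no weakening). -/
inductive SC : Bool → Multiset Form → Prop where
  | ax (full : Bool) (a : Form) (h : a.IsAtom) : SC full {a, a.negf}
  | top (full : Bool) : SC full {Form.top}
  | bot (full : Bool) {Γ : Multiset Form} : SC full Γ → SC full (Form.bot ::ₘ Γ)
  | orR (full : Bool) {Γ : Multiset Form} {A B : Form} :
      SC full (A ::ₘ B ::ₘ Γ) → SC full (Form.or A B ::ₘ Γ)
  | andR (full : Bool) {Γ Δ : Multiset Form} {A B : Form} :
      SC full (A ::ₘ Γ) → SC full (B ::ₘ Δ) → SC full (Form.and A B ::ₘ (Γ + Δ))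
  | mix (full : Bool) {Γ Δ : Multiset Form} : SC full Γ → SC full Δ → SC full (Γ + Δ)
  | exR (full : Bool) {Γ : Multiset Form} {A : Form} (x : ℕ) (t : Term) :
      SC full (A.subst1 x t ::ₘ Γ) → SC full (Form.ex x A ::ₘ Γ)
  | allR (full : Bool) {Γ : Multiset Form} {A : Form} (x : ℕ)
      (h : ∀ B ∈ Γ, ¬ B.FreeVar x) :
      SC full (A ::ₘ Γ) → SC full (Form.all x A ::ₘ Γ)
  | ctr {Γ : Multiset Form} {A : Form} : SC true (A ::ₘ A ::ₘ Γ) → SC true (A ::ₘ Γ)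
  | wk {Γ : Multiset Form} (A : Form) : SC true Γ → SC true (A ::ₘ Γ)

/-- Provability in the sequent calculus `LK1`. -/
def LK1 (Γ : Multiset Form) : Prop := SC true Γ

/-- Provability in the sequent calculus `MLL1` (first-order multiplicative
linear logic with mix). -/
def MLL1 (Γ : Multiset Form) : Prop := SC false Γ

/-! ## Auxiliary lemmas -/

namespace MLS1Xaux

open Form

/-- Composition of contexts. -/
def ctxComp : Ctx → Ctx → Ctx
  | .hole, T => T
  | .andL S B, T => .andL (ctxComp S T) B
  | .andR B S, T => .andR B (ctxComp S T)
  | .orL S B, T => .orL (ctxComp S T) B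
  | .orR B S, T => .orR B (ctxComp S T)
  | .all x S, T => .all x (ctxComp S T)
  | .ex x S, T => .ex x (ctxComp S T)

lemma fill_comp (S T : Ctx) (A : Form) : (ctxComp S T).fill A = S.fill (T.fill A) := by
  induction S <;> simp [ctxComp, Ctx.fill, *]

lemma step_ctx {R : Set RuleName} {A B : Form} (S : Ctx) (h : Step R A B) :
    Step R (S.fill A) (S.fill B) := by
  obtain ⟨r, hr, T, P, Q, hs, rfl, rfl⟩ := h
  exact ⟨r, hr, ctxComp S T, P, Q, hs, (fill_comp S T P).symm, (fill_comp S T Q).symm⟩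

lemma deriv_ctx {R : Set RuleName} {A B : Form} (S : Ctx) (h : Deriv R A B) :
    Deriv R (S.fill A) (S.fill B) :=
  h.lift S.fill (fun _ _ hab => step_ctx S hab)

lemma step_shallow {R : Set RuleName} {r : RuleName} (hr : r ∈ R) {P Q : Form}
    (h : Shallow r P Q) : Step R P Q :=
  ⟨r, hr, .hole, P, Q, h, rfl, rfl⟩

lemma mem_allTop : RuleName.allTop ∈ MLS1X := by simp [MLS1X]
lemma mem_aiDown : RuleName.aiDown ∈ MLS1X := by simp [MLS1X]
lemma mem_tDown : RuleName.tDown ∈ MLS1X := by simp [MLS1X]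
lemma mem_s : RuleName.s ∈ MLS1X := by simp [MLS1X]
lemma mem_mix : RuleName.mix ∈ MLS1X := by simp [MLS1X]
lemma mem_exR : RuleName.exR ∈ MLS1X := by simp [MLS1X]
lemma mem_equivR : RuleName.equivR ∈ MLS1X := by simp [MLS1X]

lemma equiv_deriv {A B : Form} (h : Form.Equiv A B) : Deriv MLS1X A B :=
  Relation.ReflTransGen.single (step_shallow mem_equivR (Shallow.equivR h.symm))

lemma prov_equiv {A B : Form} (h : Provable MLS1X A) (e : Form.Equiv A B) :
    Provable MLS1X B :=
  Relation.ReflTransGen.trans h (equiv_deriv e)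

lemma bigOr_cons (A : Form) {L : List Form} (h : L ≠ []) :
    Form.bigOr (A :: L) = .or A (Form.bigOr L) := by
  cases L with
  | nil => exact absurd rfl h
  | cons B L' => rfl

lemma not_freeVar_bigOr {L : List Form} {x : ℕ} (h : ∀ B ∈ L, ¬ Form.FreeVar B x) :
    ¬ (Form.bigOr L).FreeVar x := by
  induction L with
  | nil => intro hf; cases hf
  | cons A L ih =>
    cases L with
    | nil => simpa [Form.bigOr] using h A (by simp)
    | cons B L' =>
      intro hf
      cases hf with
      | orl h1 => exact h A (by simp) h1
      | orr h2 => exact ih (fun C hC => h C (by simp [hC])) h2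

lemma bigOr_perm {L L' : List Form} (p : L.Perm L') :
    Form.Equiv (Form.bigOr L) (Form.bigOr L') := by
  induction p with
  | nil => exact .refl _
  | @cons A l₁ l₂ p ih =>
    cases l₁ with
    | nil =>
      have := p.length_eq
      cases l₂ with
      | nil => exact .refl _
      | cons C l₂' => simp at this
    | cons B l₁' =>
      have := p.length_eq
      cases l₂ with
      | nil => simp at this
      | cons C l₂' =>
        rw [bigOr_cons A (by simp), bigOr_cons A (by simp)]
        exact .orCongr (.refl _) ih
  | swap A B l =>
    cases l with
    | nil => exact .orComm B A
    | cons C l' =>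
      rw [bigOr_cons B (by simp), bigOr_cons A (by simp),
          bigOr_cons A (by simp), bigOr_cons B (by simp)]
      exact ((Form.Equiv.orAssoc B A _).symm.trans
        (.orCongr (.orComm B A) (.refl _))).trans (Form.Equiv.orAssoc A B _)
  | trans p₁ p₂ ih₁ ih₂ => exact ih₁.trans ih₂

lemma bigOr_append {L₁ L₂ : List Form} (h₁ : L₁ ≠ []) (h₂ : L₂ ≠ []) :
    Form.Equiv (Form.bigOr (L₁ ++ L₂)) (.or (Form.bigOr L₁) (Form.bigOr L₂)) := by
  induction L₁ with
  | nil => exact absurd rfl h₁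
  | cons A L ih =>
    cases L with
    | nil =>
      cases L₂ with
      | nil => exact absurd rfl h₂
      | cons B L₂' => exact .refl _
    | cons B L' =>
      have e1 := ih (by simp)
      rw [show (A :: B :: L') ++ L₂ = A :: ((B :: L') ++ L₂) from rfl,
          bigOr_cons A (by simp), bigOr_cons A (L := B :: L') (by simp)]
      exact (Form.Equiv.orCongr (.refl A) e1).trans (Form.Equiv.orAssoc _ _ _).symm

lemma prov_coe {L L' : List Form} (hp : (↑L : Multiset Form) = ↑L')
    (h : Provable MLS1X (Form.bigOr L')) : Provable MLS1X (Form.bigOr L) :=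
  prov_equiv h (bigOr_perm (Multiset.coe_eq_coe.mp hp).symm)

lemma sc_ne {b : Bool} {Γ : Multiset Form} (h : SC b Γ) : Γ ≠ 0 := by
  induction h <;> simp_all [Multiset.insert_eq_cons]

lemma prov_and {A B : Form} (hA : Provable MLS1X A) (hB : Provable MLS1X B) :
    Provable MLS1X (.and A B) := by
  have s1 : Step MLS1X .top (.and .top .top) :=
    step_shallow mem_tDown (Shallow.tDown .top)
  exact Relation.ReflTransGen.trans (Relation.ReflTransGen.single s1)
    (Relation.ReflTransGen.trans (deriv_ctx (Ctx.andL .hole .top) hA)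
      (deriv_ctx (Ctx.andR A .hole) hB))

lemma prov_bot_or {X : Form} (h : Provable MLS1X X) : Provable MLS1X (.or .bot X) :=
  Relation.ReflTransGen.trans
    (Relation.ReflTransGen.single (step_shallow mem_aiDown (Shallow.aiDown .bot trivial)))
    (deriv_ctx (Ctx.orR .bot .hole) h)

lemma prov_all {x : ℕ} {X : Form} (h : Provable MLS1X X) : Provable MLS1X (.all x X) :=
  Relation.ReflTransGen.trans
    (Relation.ReflTransGen.single (step_shallow mem_allTop (Shallow.allTop x)))
    (deriv_ctx (Ctx.all x .hole) h)

lemma key_andR {A B D : Form} (h1 : Provable MLS1X A) (h2 : Provable MLS1X (.or B D)) :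
    Provable MLS1X (.or (.and A B) D) :=
  Relation.ReflTransGen.trans (prov_and h1 h2)
    (Relation.ReflTransGen.single (step_shallow mem_s (Shallow.s A B D)))

lemma key_andL {A B G : Form} (h1 : Provable MLS1X (.or A G)) (h2 : Provable MLS1X B) :
    Provable MLS1X (.or (.and A B) G) := by
  have h3 := prov_equiv (prov_and h1 h2) (Form.Equiv.andComm _ _)
  have h4 := Relation.ReflTransGen.trans h3
    (Relation.ReflTransGen.single (step_shallow mem_s (Shallow.s B A G)))
  exact prov_equiv h4 (Form.Equiv.orCongr (Form.Equiv.andComm _ _) (.refl _))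

lemma key_and {A B G D : Form} (h1 : Provable MLS1X (.or A G))
    (h2 : Provable MLS1X (.or B D)) :
    Provable MLS1X (.or (.and A B) (.or G D)) := by
  have h3 := prov_and h1 h2
  have h4 := Relation.ReflTransGen.trans h3
    (Relation.ReflTransGen.single (step_shallow mem_s (Shallow.s (.or A G) B D)))
  have h5 := prov_equiv h4 (Form.Equiv.orCongr (Form.Equiv.andComm _ _) (.refl _))
  have h6 := Relation.ReflTransGen.trans h5
    (Relation.ReflTransGen.single
      (step_ctx (Ctx.orL .hole D) (step_shallow mem_s (Shallow.s B A G))))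
  exact prov_equiv h6
    (((Form.Equiv.orCongr (Form.Equiv.orCongr (Form.Equiv.andComm _ _) (.refl _))
      (.refl _))).trans (Form.Equiv.orAssoc _ _ _))

lemma main_aux : ∀ {b : Bool} {Γ : Multiset Form}, SC b Γ → b = false →
    ∀ L : List Form, (↑L : Multiset Form) = Γ → Provable MLS1X (Form.bigOr L) := by
  intro b Γ h
  induction h with
  | ax full a ha =>
    intro _ L hL
    refine prov_coe (L' := [a, a.negf]) (by rw [hL]; rfl) ?_
    exact Relation.ReflTransGen.single (step_shallow mem_aiDown (Shallow.aiDown a ha))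
  | top full =>
    intro _ L hL
    refine prov_coe (L' := [Form.top]) (by rw [hL]; rfl) ?_
    exact Relation.ReflTransGen.refl
  | bot full hprem ih =>
    rename_i Γ'
    intro hb L hL
    have hne : Γ'.toList ≠ [] := by simpa using sc_ne hprem
    have hΓ := ih hb Γ'.toList (by rw [Multiset.coe_toList])
    refine prov_coe (L' := Form.bot :: Γ'.toList)
      (by rw [hL, ← Multiset.cons_coe, Multiset.coe_toList]) ?_
    rw [bigOr_cons _ hne]
    exact prov_bot_or hΓ
  | orR full hprem ih =>
    rename_i Γ' A B
    intro hb L hL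
    have hp := ih hb (A :: B :: Γ'.toList)
      (by rw [← Multiset.cons_coe, ← Multiset.cons_coe, Multiset.coe_toList])
    refine prov_coe (L' := Form.or A B :: Γ'.toList)
      (by rw [hL, ← Multiset.cons_coe, Multiset.coe_toList]) ?_
    cases h' : Γ'.toList with
    | nil => rw [h'] at hp; exact hp
    | cons C L' =>
      rw [h'] at hp
      rw [bigOr_cons _ (by simp)]
      rw [bigOr_cons A (by simp), bigOr_cons B (by simp)] at hp
      exact prov_equiv hp (Form.Equiv.orAssoc A B _).symm
  | andR full hp1 hp2 ih1 ih2 =>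
    rename_i Γ' Δ' A B
    intro hb L hL
    have h1 := ih1 hb (A :: Γ'.toList) (by rw [← Multiset.cons_coe, Multiset.coe_toList])
    have h2 := ih2 hb (B :: Δ'.toList) (by rw [← Multiset.cons_coe, Multiset.coe_toList])
    refine prov_coe (L' := Form.and A B :: (Γ'.toList ++ Δ'.toList))
      (by rw [hL, ← Multiset.cons_coe, ← Multiset.coe_add, Multiset.coe_toList,
        Multiset.coe_toList]) ?_
    cases hG : Γ'.toList with
    | nil =>
      rw [hG] at h1
      cases hD : Δ'.toList with
      | nil => rw [hD] at h2; exact prov_and h1 h2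
      | cons C L' =>
        rw [hD] at h2
        rw [bigOr_cons B (by simp)] at h2
        rw [List.nil_append, bigOr_cons _ (by simp)]
        exact key_andR h1 h2
    | cons C L' =>
      rw [hG] at h1
      rw [bigOr_cons A (by simp)] at h1
      cases hD : Δ'.toList with
      | nil =>
        rw [hD] at h2
        rw [List.append_nil, bigOr_cons _ (by simp)]
        exact key_andL h1 h2
      | cons E L'' =>
        rw [hD] at h2
        rw [bigOr_cons B (by simp)] at h2
        rw [bigOr_cons _ (by simp)]
        exact prov_equiv (key_and h1 h2)
          (Form.Equiv.orCongr (.refl _) (bigOr_append (by simp) (by simp)).symm)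
  | mix full hp1 hp2 ih1 ih2 =>
    rename_i Γ' Δ'
    intro hb L hL
    have hG : Γ'.toList ≠ [] := by simpa using sc_ne hp1
    have hD : Δ'.toList ≠ [] := by simpa using sc_ne hp2
    have h1 := ih1 hb Γ'.toList (by rw [Multiset.coe_toList])
    have h2 := ih2 hb Δ'.toList (by rw [Multiset.coe_toList])
    refine prov_coe (L' := Γ'.toList ++ Δ'.toList)
      (by rw [hL, ← Multiset.coe_add, Multiset.coe_toList, Multiset.coe_toList]) ?_
    have h3 := Relation.ReflTransGen.trans (prov_and h1 h2)
      (Relation.ReflTransGen.single (step_shallow mem_mix (Shallow.mix _ _)))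
    exact prov_equiv h3 (bigOr_append hG hD).symm
  | exR full x t hprem ih =>
    rename_i Γ' A
    intro hb L hL
    have h1 := ih hb (A.subst1 x t :: Γ'.toList)
      (by rw [← Multiset.cons_coe, Multiset.coe_toList])
    refine prov_coe (L' := Form.ex x A :: Γ'.toList)
      (by rw [hL, ← Multiset.cons_coe, Multiset.coe_toList]) ?_
    cases h' : Γ'.toList with
    | nil =>
      rw [h'] at h1
      exact Relation.ReflTransGen.trans h1
        (Relation.ReflTransGen.single (step_shallow mem_exR (Shallow.exR x t A)))
    | cons C L' =>
      rw [h'] at h1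
      rw [bigOr_cons _ (by simp)] at h1
      rw [bigOr_cons _ (by simp)]
      exact Relation.ReflTransGen.trans h1
        (Relation.ReflTransGen.single
          (step_ctx (Ctx.orL .hole _) (step_shallow mem_exR (Shallow.exR x t A))))
  | allR full x hfv hprem ih =>
    rename_i Γ' A
    intro hb L hL
    have h1 := ih hb (A :: Γ'.toList) (by rw [← Multiset.cons_coe, Multiset.coe_toList])
    refine prov_coe (L' := Form.all x A :: Γ'.toList)
      (by rw [hL, ← Multiset.cons_coe, Multiset.coe_toList]) ?_
    cases h' : Γ'.toList with
    | nil =>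
      rw [h'] at h1
      exact prov_all h1
    | cons C L' =>
      rw [h'] at h1
      rw [bigOr_cons _ (by simp)] at h1
      rw [bigOr_cons _ (by simp)]
      have hX : ¬ (Form.bigOr (C :: L')).FreeVar x := by
        refine not_freeVar_bigOr fun B hB => hfv B ?_
        rw [← Multiset.mem_toList, h']
        exact hB
      exact prov_equiv (prov_all h1) (Form.Equiv.allOr x A _ hX)
  | ctr hprem ih => intro hb; exact absurd hb (by simp)
  | wk A hprem ih => intro hb; exact absurd hb (by simp)

end MLS1Xaux

/-- If a nonempty sequent `⊢ Γ` is provable in `MLL1`, then the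
formula `⋁Γ` is provable in `MLS1X`. -/
theorem MLL1_to_MLS1X (Γ : List Form) (hne : Γ ≠ [])
    (h : MLL1 (↑Γ : Multiset Form)) : Provable MLS1X (Form.bigOr Γ) := by
  exact MLS1Xaux.main_aux h rfl Γ rfl
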